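/- Adjoint discrete-time path-kernel theorem, conditional form: in the probabilistic setting below, suppose the real number L satisfies the tangent path-kernel formula L = E[⟨∇Φ(x_N), v_N⟩ + (Φ(x_N) − Φ^avg_N) ∑_{n=0}^{N−1} (α_n / σ(x_n)) ⟨b_n, v_n⟩], and that this random variable is integrable. Then L also satisfies the adjoint formula L = E[⟨ν_0, v_0⟩ + ∑_{k=0}^{N−1} ⟨ν_{k+1}, δf(x_k) + δσ(x_k) b_k⟩]. -/

import Mathlib

open Matrix MeasureTheory ProbabilityTheory

/-- The gradient vector of a scalar function on `ℝ^M`, in the standard basis. -/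
noncomputable def gradVec {M : ℕ} (g : (Fin M → ℝ) → ℝ) (x : Fin M → ℝ) : Fin M → ℝ :=
  fun i => fderiv ℝ g x (Pi.single i 1)

/-- The Jacobian matrix of a map `ℝ^M → ℝ^M`, in the standard basis. -/
noncomputable def jac {M : ℕ} (f : (Fin M → ℝ) → (Fin M → ℝ)) (x : Fin M → ℝ) :
    Matrix (Fin M) (Fin M) ℝ :=
  Matrix.of fun i j => fderiv ℝ f x (Pi.single j 1) i

private lemma vecMulVec_mulVec' {M : ℕ} (g B y : Fin M → ℝ) :
    (vecMulVec g B).mulVec y = (B ⬝ᵥ y) • g := by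
  funext i
  simp only [Matrix.mulVec, Matrix.vecMulVec_apply, dotProduct, Pi.smul_apply,
    smul_eq_mul]
  rw [Finset.sum_mul]
  exact Finset.sum_congr rfl (fun j _ => by ring)

private lemma step_alg {M : ℕ} (ν1 vk df g B : Fin M → ℝ) (J : Matrix (Fin M) (Fin M) ℝ)
    (a c s ds : ℝ) :
    ν1 ⬝ᵥ (-a • vk + J.mulVec vk + df + (g ⬝ᵥ vk + ds) • B)
      - (-a • ν1 + (Jᵀ + vecMulVec g B).mulVec ν1 + (c * (a / s)) • B) ⬝ᵥ vk
      = ν1 ⬝ᵥ (df + ds • B) - c * (a / s) * (B ⬝ᵥ vk) := by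
  simp only [Matrix.add_mulVec, vecMulVec_mulVec', dotProduct_add, add_dotProduct,
    smul_dotProduct, dotProduct_smul, Matrix.dotProduct_mulVec,
    Matrix.mulVec_transpose, smul_eq_mul, dotProduct_comm B ν1,
    dotProduct_comm B vk]
  ring

/-- adjoint discrete-time path-kernel theorem, conditional form.
If the real number `L` equals the tangent path-kernel expectation
`E[⟨∇Φ(x_N), v_N⟩ + (Φ(x_N) − Φ^avg_N) ∑_{n<N} (α_n/σ(x_n)) ⟨b_n, v_n⟩]`
(and that random variable is integrable), then `L` also equals the adjoint
expectation `E[⟨ν_0, v_0⟩ + ∑_{k<N} ⟨ν_{k+1}, δf(x_k) + δσ(x_k) b_k⟩]`. -/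
theorem adjoint_path_kernel_conditional
    (M N : ℕ) (hM : 1 ≤ M) (hN : 1 ≤ N)
    (Ω : Type*) [MeasureSpace Ω] [IsProbabilityMeasure (ℙ : Measure Ω)]
    -- i.i.d. standard Gaussian noise vectors b_0, …, b_{N−1}
    (b : Fin N → Ω → Fin M → ℝ)
    (hb_meas : ∀ n, Measurable (b n))
    (hb_indep : iIndepFun b ℙ)
    (hb_law : ∀ n, Measure.map (b n) ℙ = Measure.pi fun _ : Fin M => gaussianReal 0 1)
    -- dynamics and data
    (f : (Fin M → ℝ) → (Fin M → ℝ)) (σ : (Fin M → ℝ) → ℝ)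
    (hf : ContDiff ℝ 1 f) (hσ : ContDiff ℝ 1 σ) (hσpos : ∀ y, 0 < σ y)
    (δf : (Fin M → ℝ) → (Fin M → ℝ)) (δσ : (Fin M → ℝ) → ℝ)
    (hδf : Continuous δf) (hδσ : Continuous δσ)
    (Φ : (Fin M → ℝ) → ℝ) (hΦ : ContDiff ℝ 1 Φ)
    (x0 v0 : Fin M → ℝ)
    -- the path x_{n+1} = f(x_n) + σ(x_n) b_n
    (x : ℕ → Ω → Fin M → ℝ)
    (hx0 : ∀ ω, x 0 ω = x0)
    (hx : ∀ ω, ∀ n : ℕ, ∀ h : n < N,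
      x (n + 1) ω = f (x n ω) + σ (x n ω) • b ⟨n, h⟩ ω)
    -- Φ^avg_N := E[Φ(x_N)]
    (Φavg : ℝ) (hΦavg : Φavg = ∫ ω, Φ (x N ω))
    -- adapted bounded schedule: α_n is a bounded measurable function of b_0, …, b_{n−1}
    (α : Fin N → Ω → ℝ)
    (hα_bdd : ∀ n, ∃ C, ∀ ω, |α n ω| ≤ C)
    (hα_adapted : ∀ n : Fin N,
      Measurable[MeasurableSpace.comap
        (fun ω => fun i : Fin (n : ℕ) => b (Fin.castLE n.isLt.le i) ω) inferInstance]
        (α n))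
    -- damped tangent process
    (v : ℕ → Ω → Fin M → ℝ)
    (hv0 : ∀ ω, v 0 ω = v0)
    (hv : ∀ ω, ∀ n : ℕ, ∀ h : n < N,
      v (n + 1) ω = -(α ⟨n, h⟩ ω) • v n ω + (jac f (x n ω)).mulVec (v n ω)
        + δf (x n ω)
        + ((gradVec σ (x n ω)) ⬝ᵥ v n ω + δσ (x n ω)) • b ⟨n, h⟩ ω)
    -- adjoint covector process
    (ν : ℕ → Ω → Fin M → ℝ)
    (hνN : ∀ ω, ν N ω = gradVec Φ (x N ω))
    (hν : ∀ ω, ∀ k : ℕ, ∀ h : k < N,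
      ν k ω = -(α ⟨k, h⟩ ω) • ν (k + 1) ω
        + ((jac f (x k ω))ᵀ + vecMulVec (gradVec σ (x k ω)) (b ⟨k, h⟩ ω)).mulVec
            (ν (k + 1) ω)
        + ((Φ (x N ω) - Φavg) * (α ⟨k, h⟩ ω / σ (x k ω))) • b ⟨k, h⟩ ω)
    -- assumption: L satisfies the tangent path-kernel formula, integrably
    (L : ℝ)
    (hInt : Integrable (fun ω =>
      gradVec Φ (x N ω) ⬝ᵥ v N ω
        + (Φ (x N ω) - Φavg)
          * ∑ n : Fin N, (α n ω / σ (x (n : ℕ) ω)) * (b n ω ⬝ᵥ v (n : ℕ) ω)))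
    (hL : L = ∫ ω,
      (gradVec Φ (x N ω) ⬝ᵥ v N ω
        + (Φ (x N ω) - Φavg)
          * ∑ n : Fin N, (α n ω / σ (x (n : ℕ) ω)) * (b n ω ⬝ᵥ v (n : ℕ) ω))) :
    L = ∫ ω,
      (ν 0 ω ⬝ᵥ v0
        + ∑ k : Fin N,
            ν ((k : ℕ) + 1) ω ⬝ᵥ (δf (x (k : ℕ) ω) + δσ (x (k : ℕ) ω) • b k ω)) := by
  
  have key : ∀ ω : Ω,
      gradVec Φ (x N ω) ⬝ᵥ v N ω
        + (Φ (x N ω) - Φavg)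
          * ∑ n : Fin N, (α n ω / σ (x (n : ℕ) ω)) * (b n ω ⬝ᵥ v (n : ℕ) ω)
      = ν 0 ω ⬝ᵥ v0
        + ∑ k : Fin N,
            ν ((k : ℕ) + 1) ω ⬝ᵥ (δf (x (k : ℕ) ω) + δσ (x (k : ℕ) ω) • b k ω) := by
    intro ω
    set c := Φ (x N ω) - Φavg with hc
    have step : ∀ k : Fin N,
        ν ((k : ℕ) + 1) ω ⬝ᵥ v ((k : ℕ) + 1) ω - ν (k : ℕ) ω ⬝ᵥ v (k : ℕ) ω
        = ν ((k : ℕ) + 1) ω ⬝ᵥ (δf (x (k : ℕ) ω) + δσ (x (k : ℕ) ω) • b k ω)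
          - c * (α k ω / σ (x (k : ℕ) ω)) * (b k ω ⬝ᵥ v (k : ℕ) ω) := by
      intro k
      have hvk := hv ω (k : ℕ) k.isLt
      have hνk := hν ω (k : ℕ) k.isLt
      simp only [Fin.eta] at hvk hνk
      rw [hvk, hνk]
      exact step_alg _ _ _ _ _ _ _ _ _ _
    have tele : ν N ω ⬝ᵥ v N ω - ν 0 ω ⬝ᵥ v 0 ω
        = ∑ k : Fin N,
            (ν ((k : ℕ) + 1) ω ⬝ᵥ v ((k : ℕ) + 1) ω - ν (k : ℕ) ω ⬝ᵥ v (k : ℕ) ω) := by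
      rw [Fin.sum_univ_eq_sum_range
        (fun k : ℕ => ν (k + 1) ω ⬝ᵥ v (k + 1) ω - ν k ω ⬝ᵥ v k ω),
        Finset.sum_range_sub (fun k : ℕ => ν k ω ⬝ᵥ v k ω)]
    rw [Finset.sum_congr rfl (fun k _ => step k), Finset.sum_sub_distrib, hνN ω, hv0 ω] at tele
    have hmul : c * ∑ n : Fin N, α n ω / σ (x (n : ℕ) ω) * (b n ω ⬝ᵥ v (n : ℕ) ω)
        = ∑ n : Fin N, c * (α n ω / σ (x (n : ℕ) ω)) * (b n ω ⬝ᵥ v (n : ℕ) ω) := by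
      rw [Finset.mul_sum]
      exact Finset.sum_congr rfl (fun _ _ => by ring)
    linarith [tele, hmul]
  rw [hL]
  exact integral_congr_ae (Filter.Eventually.of_forall key)
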